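/- Let 𝔡 be a finite-dimensional real vector space, let X₁, …, X_d ∈ 𝔡 span 𝔡 over ℝ, let λ₁, …, λ_d ∈ ℝ, and let Δ := { μ ∈ 𝔡* : ⟨μ, X_j⟩ ≥ λ_j for j = 1, …, d }. Assume that for every μ ∈ Δ the family { X_j : ⟨μ, X_j⟩ = λ_j } is linearly independent (as holds for a simple convex polytope with irredundant presentation). Let π : ℝᵈ → 𝔡 be the surjective linear map with π(e_j) = X_j, let 𝔫 := ker π, and define Ψ : ℂᵈ → 𝔫* by Ψ(z)(Y) := Σ_{j=1}^d (|z_j|² + λ_j) Y_j for Y ∈ 𝔫. Then 0 is a regular value of Ψ: for every z ∈ ℂᵈ with Ψ(z) = 0, the Fréchet derivative of Ψ at z (as a map of real normed spaces ℂᵈ → 𝔫*) is surjective. -/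

import Mathlib

open scoped BigOperators

/-- The linear pairing `c ↦ (Y ↦ ∑ j, c j * Y j)` on a subspace `𝔫 ≤ ℝᵈ`. -/
noncomputable def delzantPairL {d : ℕ} (𝔫 : Submodule ℝ (Fin d → ℝ)) :
    (Fin d → ℝ) →ₗ[ℝ] (𝔫 →L[ℝ] ℝ) where
  toFun c := (∑ j, c j • (ContinuousLinearMap.proj j : (Fin d → ℝ) →L[ℝ] ℝ)).comp 𝔫.subtypeL
  map_add' c c' := by
    ext Y
    simp [add_smul, Finset.sum_add_distrib]
  map_smul' r c := by
    ext Y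
    simp [smul_smul, Finset.mul_sum, mul_assoc]

theorem delzantPairL_apply {d : ℕ} (𝔫 : Submodule ℝ (Fin d → ℝ)) (c : Fin d → ℝ)
    (Y : 𝔫) : delzantPairL 𝔫 c Y = ∑ j, c j * (Y : Fin d → ℝ) j := by
  simp [delzantPairL]

/-- Continuous version of the pairing. -/
noncomputable def delzantPairCLM {d : ℕ} (𝔫 : Submodule ℝ (Fin d → ℝ)) :
    (Fin d → ℝ) →L[ℝ] (𝔫 →L[ℝ] ℝ) :=
  ⟨delzantPairL 𝔫, LinearMap.continuous_of_finiteDimensional (𝕜 := ℝ) (E := Fin d → ℝ) (F' := 𝔫 →L[ℝ] ℝ)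
    (delzantPairL 𝔫)⟩

theorem delzantPairCLM_apply {d : ℕ} (𝔫 : Submodule ℝ (Fin d → ℝ)) (c : Fin d → ℝ)
    (Y : 𝔫) : delzantPairCLM 𝔫 c Y = ∑ j, c j * (Y : Fin d → ℝ) j :=
  delzantPairL_apply 𝔫 c Y

/-- Derivative of `z ↦ (j ↦ |z j|² + λ j)` at `z`. -/
noncomputable def delzantD {d : ℕ} (z : Fin d → ℂ) : (Fin d → ℂ) →L[ℝ] (Fin d → ℝ) :=
  ContinuousLinearMap.pi fun j =>
    (2 * (z j).re) • (Complex.reCLM.comp (ContinuousLinearMap.proj j)) +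
    (2 * (z j).im) • (Complex.imCLM.comp (ContinuousLinearMap.proj j))

theorem delzantD_apply {d : ℕ} (z w : Fin d → ℂ) (j : Fin d) :
    delzantD z w j = 2 * (z j).re * (w j).re + 2 * (z j).im * (w j).im := by
  simp [delzantD]

theorem delzant_hasFDerivAt {d : ℕ} (lam : Fin d → ℝ) (z : Fin d → ℂ) :
    HasFDerivAt (fun w : Fin d → ℂ => fun j => Complex.normSq (w j) + lam j)
      (delzantD z) z := by
  apply hasFDerivAt_pi.2
  intro j
  have hre : HasFDerivAt (fun w : Fin d → ℂ => (w j).re)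
      (Complex.reCLM.comp (ContinuousLinearMap.proj j)) z :=
    (Complex.reCLM.comp (ContinuousLinearMap.proj j : (Fin d → ℂ) →L[ℝ] ℂ)).hasFDerivAt
  have him : HasFDerivAt (fun w : Fin d → ℂ => (w j).im)
      (Complex.imCLM.comp (ContinuousLinearMap.proj j)) z :=
    (Complex.imCLM.comp (ContinuousLinearMap.proj j : (Fin d → ℂ) →L[ℝ] ℂ)).hasFDerivAt
  have h := ((hre.mul hre).add (him.mul him)).add_const (lam j)
  have hfun : (fun w : Fin d → ℂ => (w j).re * (w j).re + (w j).im * (w j).im + lam j)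
      = fun w : Fin d → ℂ => Complex.normSq (w j) + lam j := by
    funext w; simp [Complex.normSq_apply]
  simp only [Pi.add_apply, Pi.mul_apply] at h
  rw [hfun] at h
  convert h using 1
  ext w
  simp
  ring

theorem delzant_hasFDerivAt' {d : ℕ} (𝔫 : Submodule ℝ (Fin d → ℝ)) (lam : Fin d → ℝ)
    (z : Fin d → ℂ) :
    HasFDerivAt (fun w : Fin d → ℂ => delzantPairCLM 𝔫 (fun j => Complex.normSq (w j) + lam j))
      ((delzantPairCLM 𝔫).comp (delzantD z)) z :=
  by
  have h1 := ContinuousLinearMap.hasFDerivAt (𝕜 := ℝ) (F := 𝔫 →L[ℝ] ℝ) (delzantPairCLM 𝔫) (x := fun j => Complex.normSq (z j) + lam j)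
  exact HasFDerivAt.comp (G := 𝔫 →L[ℝ] ℝ) z h1 (delzant_hasFDerivAt lam z)

theorem delzant_coord (a : ℂ) (t : ℝ) (ha : a ≠ 0) :
    2 * a.re * ((t / (2 * Complex.normSq a)) • a).re
      + 2 * a.im * ((t / (2 * Complex.normSq a)) • a).im = t := by
  have hn : Complex.normSq a ≠ 0 := fun h => ha (Complex.normSq_eq_zero.mp h)
  have h1 : ((t / (2 * Complex.normSq a)) • a).re = (t / (2 * Complex.normSq a)) * a.re := by
    rw [Complex.smul_re, smul_eq_mul]
  have h2 : ((t / (2 * Complex.normSq a)) • a).im = (t / (2 * Complex.normSq a)) * a.im := by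
    rw [Complex.smul_im, smul_eq_mul]
  rw [h1, h2, Complex.normSq_apply] at *
  rw [show 2 * a.re * (t / (2 * (a.re * a.re + a.im * a.im)) * a.re)
      + 2 * a.im * (t / (2 * (a.re * a.re + a.im * a.im)) * a.im)
      = t / (2 * (a.re * a.re + a.im * a.im)) * (2 * (a.re * a.re + a.im * a.im)) by ring]
  exact div_mul_cancel₀ _ (mul_ne_zero two_ne_zero hn)

theorem delzant_zero_regular_value
    {𝔡 : Type*} [AddCommGroup 𝔡] [Module ℝ 𝔡] [FiniteDimensional ℝ 𝔡]
    {d : ℕ} (X : Fin d → 𝔡) (hspan : Submodule.span ℝ (Set.range X) = ⊤)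
    (lam : Fin d → ℝ)
    (hsimple : ∀ μ : Module.Dual ℝ 𝔡, (∀ j, lam j ≤ μ (X j)) →
      LinearIndependent ℝ (fun j : {j : Fin d // μ (X j) = lam j} => X (j : Fin d)))
    (proj : (Fin d → ℝ) →ₗ[ℝ] 𝔡) (hproj : ∀ j, proj (Pi.single j 1) = X j)
    (Ψ : (Fin d → ℂ) → (↥(LinearMap.ker proj) →L[ℝ] ℝ))
    (hΨ : ∀ (z : Fin d → ℂ) (Y : ↥(LinearMap.ker proj)),
      Ψ z Y = ∑ j, (‖z j‖ ^ 2 + lam j) * (Y : Fin d → ℝ) j) :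
    ∀ z : Fin d → ℂ, Ψ z = 0 → Function.Surjective (fderiv ℝ Ψ z) := by
  classical
  intro z hz
  -- Ψ in terms of the pairing
  have hΨeq : Ψ = fun w => delzantPairCLM (LinearMap.ker proj)
      (fun j => Complex.normSq (w j) + lam j) := by
    funext w
    ext Y
    rw [hΨ]
    simp only [delzantPairCLM, ContinuousLinearMap.coe_mk', delzantPairL_apply]
    congr 1
    funext j
    rw [Complex.sq_norm]
  -- the derivative of Ψ at z
  have hD : HasFDerivAt Ψ ((delzantPairCLM (LinearMap.ker proj)).comp (delzantD z)) z := by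
    rw [hΨeq]
    exact delzant_hasFDerivAt' (LinearMap.ker proj) lam z
  rw [hD.fderiv]
  -- surjectivity
  intro ξ
  -- the coordinate projection onto the support of z
  set P : (Fin d → ℝ) →ₗ[ℝ] (Fin d → ℝ) :=
    LinearMap.pi (fun j => if z j = 0 then 0 else LinearMap.proj j) with hP
  have hPapply : ∀ (Y : Fin d → ℝ) j, P Y j = if z j = 0 then 0 else Y j := by
    intro Y j
    by_cases h : z j = 0 <;> simp [hP, LinearMap.pi_apply, h]
  -- the functional μ
  obtain ⟨σ, hσ⟩ := proj.exists_rightInverse_of_surjective (by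
    rw [eq_top_iff, ← hspan, Submodule.span_le]
    rintro x ⟨j, rfl⟩
    exact ⟨Pi.single j 1, hproj j⟩)
  set ν : (Fin d → ℝ) →ₗ[ℝ] ℝ :=
    ∑ j, (Complex.normSq (z j) + lam j) • LinearMap.proj j with hν
  have hνapply : ∀ Y : Fin d → ℝ, ν Y = ∑ j, (Complex.normSq (z j) + lam j) * Y j := by
    intro Y; simp [hν]
  have hνker : ∀ Y ∈ (LinearMap.ker proj), ν Y = 0 := by
    intro Y hY
    have := hΨ z ⟨Y, hY⟩
    rw [hz] at this
    simp only [ContinuousLinearMap.zero_apply] at this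
    rw [hνapply]
    rw [show ∑ j, (Complex.normSq (z j) + lam j) * Y j
        = ∑ j, (‖z j‖ ^ 2 + lam j) * Y j from
      Finset.sum_congr rfl fun j _ => by rw [Complex.sq_norm], ← this]
  set μ : Module.Dual ℝ 𝔡 := ν.comp σ with hμ
  have hμproj : ∀ x : Fin d → ℝ, μ (proj x) = ν x := by
    intro x
    have hker : σ (proj x) - x ∈ (LinearMap.ker proj) := by
      rw [LinearMap.mem_ker, map_sub, sub_eq_zero]
      exact congrFun (congrArg DFunLike.coe hσ) (proj x)
    have h0 := hνker _ hker
    rw [map_sub, sub_eq_zero] at h0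
    simpa [hμ] using h0
  have hμX : ∀ j, μ (X j) = Complex.normSq (z j) + lam j := by
    intro j
    rw [← hproj j, hμproj, hνapply]
    simp [Pi.single_apply, Finset.sum_ite_eq', mul_ite]
  have hμΔ : ∀ j, lam j ≤ μ (X j) := by
    intro j
    rw [hμX j]
    have := Complex.normSq_nonneg (z j)
    linarith
  have hzero : ∀ j, μ (X j) = lam j ↔ z j = 0 := by
    intro j
    rw [hμX j]
    constructor
    · intro h
      have : Complex.normSq (z j) = 0 := by linarith
      exact Complex.normSq_eq_zero.mp this
    · intro h; simp [h]
  -- injectivity of P restricted to (LinearMap.ker proj)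
  have hinj : LinearMap.ker (P.comp (LinearMap.ker proj).subtype) = ⊥ := by
    rw [LinearMap.ker_eq_bot']
    rintro ⟨Y, hY⟩ hPY
    have hsupp : ∀ j, z j ≠ 0 → Y j = 0 := by
      intro j hj
      have h2 : P Y j = 0 := congrFun (show P Y = 0 from hPY) j
      rw [hPapply] at h2
      simpa [hj] using h2
    have hli := hsimple μ hμΔ
    rw [Fintype.linearIndependent_iff] at hli
    have hsum : ∑ j : {j : Fin d // μ (X j) = lam j}, Y (j : Fin d) • X (j : Fin d) = 0 := by
      have h1 : proj Y = ∑ j, Y j • X j := by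
        rw [proj.pi_apply_eq_sum_univ Y]
        refine Finset.sum_congr rfl fun j _ => ?_
        have hs : (fun k => if j = k then (1:ℝ) else 0) = Pi.single j 1 := by
          funext k
          simp [Pi.single_apply, eq_comm]
        rw [hs, hproj]
      have h2 : proj Y = 0 := hY
      have h3 : ∑ j : {j : Fin d // μ (X j) = lam j}, Y (j : Fin d) • X (j : Fin d)
          = ∑ j ∈ Finset.univ.filter (fun j => μ (X j) = lam j), Y j • X j := by
        rw [← Finset.sum_subtype (Finset.univ.filter (fun j => μ (X j) = lam j))
          (fun j => by simp) (fun j => Y j • X j)]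
      rw [h3, Finset.sum_filter_of_ne, ← h1, h2]
      intro j _ hj
      by_cases h0 : z j = 0
      · exact (hzero j).mpr h0
      · exact absurd (by rw [hsupp j h0, zero_smul]) hj
    have hall := hli (fun j => Y (j : Fin d)) hsum
    have hYzero : Y = 0 := by
      funext j
      by_cases hj : z j = 0
      · exact hall ⟨j, (hzero j).mpr hj⟩
      · exact hsupp j hj
    exact Subtype.ext hYzero
  obtain ⟨g, hg⟩ := (P.comp (LinearMap.ker proj).subtype).exists_leftInverse_of_injective hinj
  set ℓ : (Fin d → ℝ) →ₗ[ℝ] ℝ := ((ξ : (LinearMap.ker proj) →ₗ[ℝ] ℝ).comp g).comp P with hℓ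
  have hℓN : ∀ Y : (LinearMap.ker proj), ℓ (Y : Fin d → ℝ) = ξ Y := by
    intro Y
    have : g (P ((LinearMap.ker proj).subtype Y)) = Y := congrFun (congrArg DFunLike.coe hg) Y
    simp only [hℓ, LinearMap.comp_apply]
    rw [show P (Y : Fin d → ℝ) = P ((LinearMap.ker proj).subtype Y) from rfl, this]
    rfl
  have hℓsupp : ∀ j, z j = 0 → ℓ (Pi.single j 1) = 0 := by
    intro j hj
    have : P (Pi.single j 1) = 0 := by
      funext k
      rw [hPapply]
      by_cases hk : z k = 0
      · simp [hk]
      · have : k ≠ j := fun h => hk (h ▸ hj)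
        simp [hk, Pi.single_apply, this]
    simp [hℓ, this]
  -- the preimage
  refine ⟨fun j => if hj : z j = 0 then 0
    else (ℓ (Pi.single j 1) / (2 * Complex.normSq (z j))) • z j, ?_⟩
  set w : Fin d → ℂ := fun j => if hj : z j = 0 then 0
    else (ℓ (Pi.single j 1) / (2 * Complex.normSq (z j))) • z j with hw
  have hDw : ∀ j, delzantD z w j = ℓ (Pi.single j 1) := by
    intro j
    rw [delzantD_apply]
    by_cases hj : z j = 0
    · rw [hℓsupp j hj]
      simp [hw, hj]
    · have hwj : w j = (ℓ (Pi.single j 1) / (2 * Complex.normSq (z j))) • z j := by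
        simp [hw, hj]
      rw [hwj]
      exact delzant_coord (z j) (ℓ (Pi.single j 1)) hj
  ext Y
  simp only [ContinuousLinearMap.comp_apply]
  rw [delzantPairCLM_apply (LinearMap.ker proj) (delzantD z w) Y]
  have : ∑ j, delzantD z w j * (Y : Fin d → ℝ) j
      = ∑ j, (Y : Fin d → ℝ) j • ℓ (Pi.single j 1) := by
    refine Finset.sum_congr rfl fun j _ => ?_
    rw [hDw j, smul_eq_mul, mul_comm]
  rw [this]
  have h4 : ℓ (Y : Fin d → ℝ) = ∑ j, (Y : Fin d → ℝ) j • ℓ (Pi.single j 1) := by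
    rw [ℓ.pi_apply_eq_sum_univ (Y : Fin d → ℝ)]
    refine Finset.sum_congr rfl fun j _ => ?_
    have hs : (fun k => if j = k then (1:ℝ) else 0) = Pi.single j 1 := by
      funext k
      simp [Pi.single_apply, eq_comm]
    rw [hs]
  rw [← h4, hℓN]
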